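/- arXiv:math/0412185 — 2 statements merged into one kernel-verified Lean document; each statement's English description precedes it below -/
import Mathlib

section
/- Let H be a finite-dimensional inner product space, and let A_t and A_∞ be positive semi-definite self-adjoint operators on H with A_t → A_∞ in operator norm. Let λ_t and λ_∞ denote the smallest strictly positive eigenvalues of A_t and A_∞ respectively (assumed to exist). Then limsup_{t→∞} λ_t ≤ λ_∞, with no assumption on the dimensions of the kernels. -/
open Filter

lemma key_spec {H : Type*} [NormedAddCommGroup H] [InnerProductSpace ℝ H]
    [FiniteDimensional ℝ H] (T : H →ₗ[ℝ] H) (hT : T.IsSymmetric) (l : ℝ)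
    (h : ∀ μ, Module.End.HasEigenvalue T μ → μ = 0 ∨ l ≤ μ) (v : H) :
    l * (inner ℝ (T v) (T v) : ℝ) ≤ (inner ℝ (T (T (T v))) v : ℝ) := by
  set n := Module.finrank ℝ H with hn
  have hrank : Module.finrank ℝ H = n := rfl
  set b := hT.eigenvectorBasis hrank with hb
  set μ := hT.eigenvalues hrank with hμ
  have hrepr : ∀ (x : H) (i : Fin n), b.repr (T x) i = μ i * b.repr x i :=
    fun x i => hT.eigenvectorBasis_apply_self_apply hrank x i
  have hinner : ∀ x y : H, (inner ℝ x y : ℝ) = ∑ i, b.repr x i * b.repr y i := by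
    intro x y
    have h := b.repr.inner_map_map x y
    rw [← h, PiLp.inner_apply]
    simp [RCLike.inner_apply]
    exact Finset.sum_congr rfl (fun _ _ => mul_comm _ _)
  rw [hinner, hinner, Finset.mul_sum]
  apply Finset.sum_le_sum
  intro i _
  have hev : μ i = 0 ∨ l ≤ μ i := h (μ i) (hT.hasEigenvalue_eigenvalues hrank i)
  have h1 : b.repr (T v) i = μ i * b.repr v i := hrepr v i
  have h3 : b.repr (T (T (T v))) i = μ i * (μ i * (μ i * b.repr v i)) := by
    rw [hrepr, hrepr, hrepr]
  rw [h1, h3]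
  rcases hev with h0 | hl
  · simp [h0]
  · nlinarith [sq_nonneg (b.repr v i), sq_nonneg (μ i * b.repr v i)]

theorem stmt11 (H : Type*) [NormedAddCommGroup H] [InnerProductSpace ℝ H]
    [FiniteDimensional ℝ H]
    (A : ℕ → H →L[ℝ] H) (Ainf : H →L[ℝ] H)
    (hsa : ∀ t, IsSelfAdjoint (A t)) (hsainf : IsSelfAdjoint Ainf)
    (hpsd : ∀ t v, 0 ≤ (inner ℝ (A t v) v : ℝ))
    (hpsdinf : ∀ v, 0 ≤ (inner ℝ (Ainf v) v : ℝ))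
    (hconv : Tendsto A atTop (nhds Ainf))
    (lam : ℕ → ℝ) (laminf : ℝ)
    (hlam_eig : ∀ t, Module.End.HasEigenvalue ((A t) : H →ₗ[ℝ] H) (lam t))
    (hlam_pos : ∀ t, 0 < lam t)
    (hlam_min : ∀ t μ, Module.End.HasEigenvalue ((A t) : H →ₗ[ℝ] H) μ → 0 < μ → lam t ≤ μ)
    (hlaminf_eig : Module.End.HasEigenvalue (Ainf : H →ₗ[ℝ] H) laminf)
    (hlaminf_pos : 0 < laminf)
    (hlaminf_min : ∀ μ, Module.End.HasEigenvalue (Ainf : H →ₗ[ℝ] H) μ → 0 < μ → laminf ≤ μ) :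
    ∀ ε > 0, ∀ᶠ t in atTop, lam t ≤ laminf + ε := by
  intro ε hε
  -- eigenvector of Ainf
  obtain ⟨ψ, hψmem, hψne⟩ := hlaminf_eig.exists_hasEigenvector
  have hψeq : Ainf ψ = laminf • ψ := Module.End.mem_eigenspace_iff.mp hψmem
  have hs : (0:ℝ) < ‖ψ‖ ^ 2 := pow_pos (norm_pos_iff.mpr hψne) 2
  -- limits of the two quadratic forms
  have h1 : Tendsto (fun t => A t ψ) atTop (nhds (Ainf ψ)) :=
    ((ContinuousLinearMap.apply ℝ H ψ).continuous.tendsto Ainf).comp hconv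
  have heval : Continuous fun p : (H →L[ℝ] H) × H => p.1 p.2 :=
    isBoundedBilinearMap_apply.continuous
  have h2 : Tendsto (fun t => A t (A t ψ)) atTop (nhds (Ainf (Ainf ψ))) :=
    (heval.tendsto (Ainf, Ainf ψ)).comp (hconv.prodMk_nhds h1)
  have h3 : Tendsto (fun t => A t (A t (A t ψ))) atTop (nhds (Ainf (Ainf (Ainf ψ)))) :=
    (heval.tendsto (Ainf, Ainf (Ainf ψ))).comp (hconv.prodMk_nhds h2)
  have hF : Tendsto (fun t => (inner ℝ (A t (A t (A t ψ))) ψ : ℝ)) atTop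
      (nhds (inner ℝ (Ainf (Ainf (Ainf ψ))) ψ)) := h3.inner tendsto_const_nhds
  have hG : Tendsto (fun t => (inner ℝ (A t ψ) (A t ψ) : ℝ)) atTop
      (nhds (inner ℝ (Ainf ψ) (Ainf ψ))) := h1.inner h1
  have hFA : (inner ℝ (Ainf (Ainf (Ainf ψ))) ψ : ℝ) = laminf ^ 3 * ‖ψ‖ ^ 2 := by
    simp only [hψeq, map_smul, smul_smul, real_inner_smul_left, real_inner_self_eq_norm_sq]
    ring
  have hGA : (inner ℝ (Ainf ψ) (Ainf ψ) : ℝ) = laminf ^ 2 * ‖ψ‖ ^ 2 := by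
    rw [hψeq, real_inner_smul_left, real_inner_smul_right, real_inner_self_eq_norm_sq]
    ring
  have hGA_ne : (inner ℝ (Ainf ψ) (Ainf ψ) : ℝ) ≠ 0 := by
    rw [hGA]; positivity
  have hratio : Tendsto
      (fun t => (inner ℝ (A t (A t (A t ψ))) ψ : ℝ) / (inner ℝ (A t ψ) (A t ψ) : ℝ))
      atTop (nhds laminf) := by
    have := hF.div hG hGA_ne
    rw [hFA, hGA] at this
    convert this using 2
    · simp only [Pi.div_apply, div_eq_mul_inv]
    · rw [eq_div_iff (by positivity)]
      ring
  have hGpos : ∀ᶠ t in atTop, (0:ℝ) < (inner ℝ (A t ψ) (A t ψ) : ℝ) := by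
    apply hG.eventually
    rw [hGA]
    exact eventually_gt_nhds (by positivity)
  have hclose : ∀ᶠ t in atTop,
      (inner ℝ (A t (A t (A t ψ))) ψ : ℝ) / (inner ℝ (A t ψ) (A t ψ) : ℝ) ≤ laminf + ε :=
    hratio.eventually (eventually_le_nhds (by linarith))
  filter_upwards [hGpos, hclose] with t hgt hct
  -- key spectral inequality
  have hkey : lam t * (inner ℝ (A t ψ) (A t ψ) : ℝ) ≤ (inner ℝ (A t (A t (A t ψ))) ψ : ℝ) := by
    have hsym : ((A t : H →ₗ[ℝ] H)).IsSymmetric := (hsa t).isSymmetric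
    have hev : ∀ μ, Module.End.HasEigenvalue ((A t) : H →ₗ[ℝ] H) μ → μ = 0 ∨ lam t ≤ μ := by
      intro μ hμ
      obtain ⟨v, hvmem, hvne⟩ := hμ.exists_hasEigenvector
      have hveq : A t v = μ • v := Module.End.mem_eigenspace_iff.mp hvmem
      have hμnn : 0 ≤ μ := by
        have hp := hpsd t v
        rw [hveq, real_inner_smul_left] at hp
        have hv2 : (0:ℝ) < inner ℝ v v := by
          rw [real_inner_self_eq_norm_sq]; exact pow_pos (norm_pos_iff.mpr hvne) 2
        nlinarith
      rcases hμnn.eq_or_lt with h0 | hpos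
      · exact Or.inl h0.symm
      · exact Or.inr (hlam_min t μ hμ hpos)
    exact key_spec (A t : H →ₗ[ℝ] H) hsym (lam t) hev ψ
  calc lam t ≤ (inner ℝ (A t (A t (A t ψ))) ψ : ℝ) / (inner ℝ (A t ψ) (A t ψ) : ℝ) :=
        (le_div_iff₀ hgt).mpr hkey
    _ ≤ laminf + ε := hct
end

section
/- Let Y, Z : [0, ∞) → [0, ∞) be continuous with Y differentiable, and suppose Y'(t) ≤ C₁·Y(t) + C₂·√(Z(t))·√(Y(t)) for constants C₁, C₂ ≥ 0, with ∫₀^∞ Y(t) dt < ∞ and ∫₀^∞ Z(t) dt < ∞. Then Y(t) → 0 as t → ∞. -/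
open MeasureTheory Filter Set

theorem stmt14 (Y Z : ℝ → ℝ) (C₁ C₂ : ℝ) (hC₁ : 0 ≤ C₁) (hC₂ : 0 ≤ C₂)
    (hYpos : ∀ t, 0 ≤ t → 0 ≤ Y t) (hZpos : ∀ t, 0 ≤ t → 0 ≤ Z t)
    (hYcont : ContinuousOn Y (Set.Ici 0)) (hZcont : ContinuousOn Z (Set.Ici 0))
    (hYdiff : ∀ t, 0 ≤ t → DifferentiableAt ℝ Y t)
    (hderiv : ∀ t, 0 ≤ t →
      deriv Y t ≤ C₁ * Y t + C₂ * Real.sqrt (Z t) * Real.sqrt (Y t))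
    (hYint : IntegrableOn Y (Set.Ici 0))
    (hZint : IntegrableOn Z (Set.Ici 0)) :
    Tendsto Y atTop (nhds 0) := by
  set φ : ℝ → ℝ := fun s => C₁ * Y s + C₂ * Real.sqrt (Z s) * Real.sqrt (Y s) with hφ
  -- integrability of the sqrt product
  have hsqm : AEStronglyMeasurable (fun s => Real.sqrt (Z s) * Real.sqrt (Y s))
      (volume.restrict (Ici (0:ℝ))) := by
    have : ContinuousOn (fun s => Real.sqrt (Z s) * Real.sqrt (Y s)) (Ici (0:ℝ)) :=
      (Real.continuous_sqrt.comp_continuousOn hZcont).mul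
        (Real.continuous_sqrt.comp_continuousOn hYcont)
    exact this.aestronglyMeasurable measurableSet_Ici
  have hsqint : IntegrableOn (fun s => Real.sqrt (Z s) * Real.sqrt (Y s)) (Ici (0:ℝ)) := by
    apply Integrable.mono' (((hZint.add hYint).div_const 2)) hsqm
    rw [ae_restrict_iff' measurableSet_Ici]
    filter_upwards with s hs
    have h1 : 0 ≤ Z s := hZpos s hs
    have h2 : 0 ≤ Y s := hYpos s hs
    have := Real.sq_sqrt h1
    have := Real.sq_sqrt h2
    have := Real.sqrt_nonneg (Z s)
    have := Real.sqrt_nonneg (Y s)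
    rw [Real.norm_eq_abs, abs_of_nonneg (by positivity)]
    simp only [Pi.add_apply]
    nlinarith [sq_nonneg (Real.sqrt (Z s) - Real.sqrt (Y s))]
  have hφint : IntegrableOn φ (Ici (0:ℝ)) := by
    have : IntegrableOn (fun s => C₂ * (Real.sqrt (Z s) * Real.sqrt (Y s))) (Ici (0:ℝ)) :=
      hsqint.const_mul C₂
    have h2 : IntegrableOn (fun s => C₁ * Y s) (Ici (0:ℝ)) := hYint.const_mul C₁
    refine (h2.add this).congr_fun (fun s _ => ?_) measurableSet_Ici
    simp [hφ, mul_assoc]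
  set F : ℝ → ℝ := fun s => Y s + φ s with hF
  have hFint : IntegrableOn F (Ici (0:ℝ)) := hYint.add hφint
  have hφpos : ∀ s, 0 ≤ s → 0 ≤ φ s := fun s hs => by
    have := hYpos s hs
    have := Real.sqrt_nonneg (Z s)
    have := Real.sqrt_nonneg (Y s)
    positivity
  have hFpos : ∀ s, 0 ≤ s → 0 ≤ F s := fun s hs => add_nonneg (hYpos s hs) (hφpos s hs)
  set T : ℝ → ℝ := fun s => ∫ x in Ici s, F x with hT
  -- T is antitone on [0, ∞)
  have hTanti : ∀ s s' : ℝ, 0 ≤ s → s ≤ s' → T s' ≤ T s := by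
    intro s s' hs hss'
    apply setIntegral_mono_set (hFint.mono_set (Ici_subset_Ici.2 hs))
    · rw [EventuallyLE, ae_restrict_iff' measurableSet_Ici]
      filter_upwards with x hx
      exact hFpos x (le_trans hs hx)
    · exact HasSubset.Subset.eventuallyLE (Ici_subset_Ici.2 hss')
  -- T n → 0 along ℕ
  have hTn : Tendsto (fun n : ℕ => T n) atTop (nhds 0) := by
    have hmono : Monotone (fun n : ℕ => Ico (0:ℝ) n) := fun a b hab =>
      Ico_subset_Ico le_rfl (by exact_mod_cast hab)
    have hU : (⋃ n : ℕ, Ico (0:ℝ) n) = Ici 0 := by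
      ext x
      simp only [mem_iUnion, mem_Ico, mem_Ici]
      constructor
      · rintro ⟨n, h, _⟩; exact h
      · intro hx
        obtain ⟨n, hn⟩ := exists_nat_gt x
        exact ⟨n, hx, hn⟩
    have h1 : Tendsto (fun n : ℕ => ∫ x in Ico (0:ℝ) n, F x) atTop
        (nhds (∫ x in Ici (0:ℝ), F x)) := by
      have := tendsto_setIntegral_of_monotone (fun n : ℕ => measurableSet_Ico) hmono
        (by rw [hU]; exact hFint)
      rwa [hU] at this
    have h2 : ∀ n : ℕ, T n = (∫ x in Ici (0:ℝ), F x) - ∫ x in Ico (0:ℝ) n, F x := by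
      intro n
      have hdisj : Disjoint (Ico (0:ℝ) n) (Ici (n:ℝ)) := by
        rw [Set.disjoint_left]
        rintro x ⟨_, h2⟩ h3
        exact absurd h3 (not_le.2 h2)
      have hun : Ico (0:ℝ) n ∪ Ici (n:ℝ) = Ici 0 := Ico_union_Ici_eq_Ici (n.cast_nonneg)
      have := setIntegral_union hdisj measurableSet_Ici
        (hFint.mono_set ((hun ▸ subset_union_left : Ico (0:ℝ) n ⊆ Ici 0)))
        (hFint.mono_set (Ici_subset_Ici.2 n.cast_nonneg))
      rw [hun] at this
      simp only [hT]
      linarith [this]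
    simp only [h2]
    have := h1.const_sub (∫ x in Ici (0:ℝ), F x)
    simpa using this
  -- main bound: Y t ≤ T (t - 2) for t ≥ 2
  have key : ∀ t : ℝ, 2 ≤ t → Y t ≤ T (t - 2) := by
    intro t ht
    have h02 : (0:ℝ) ≤ t - 2 := by linarith
    -- choose minimum point on [t-2, t-1]
    obtain ⟨b, hbmem, hbmin⟩ := (isCompact_Icc : IsCompact (Icc (t - 2) (t - 1))).exists_isMinOn
      (nonempty_Icc.2 (by linarith)) (hYcont.mono (fun x hx => le_trans h02 hx.1))
    have hb0 : 0 ≤ b := le_trans h02 hbmem.1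
    have hbt : b ≤ t := le_trans hbmem.2 (by linarith)
    -- Y b ≤ ∫ over Icc (t-2) (t-1)
    have hYIcc : IntegrableOn Y (Icc (t - 2) (t - 1)) :=
      hYint.mono_set (fun x hx => le_trans h02 hx.1)
    have h1 : Y b ≤ ∫ x in Icc (t - 2) (t - 1), Y x := by
      have hc : (∫ _ in Icc (t - 2) (t - 1), Y b) ≤ ∫ x in Icc (t - 2) (t - 1), Y x := by
        apply setIntegral_mono_on (integrableOn_const (by
          rw [Real.volume_Icc]; exact ENNReal.ofReal_ne_top)) hYIcc measurableSet_Icc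
        intro x hx
        exact hbmin hx
      rwa [setIntegral_const, measureReal_def, Real.volume_Icc, show t - 1 - (t - 2) = 1 by ring,
        ENNReal.toReal_ofReal one_pos.le, one_smul] at hc
    -- FTC-type bound
    have h2 : Y t - Y b ≤ ∫ x in b..t, φ x := by
      apply intervalIntegral.sub_le_integral_of_hasDeriv_right_of_le hbt
      · exact hYcont.mono (fun x hx => le_trans hb0 hx.1)
      · intro x hx
        exact ((hYdiff x (le_trans hb0 hx.1.le)).hasDerivAt).hasDerivWithinAt
      · exact hφint.mono_set (fun x hx => le_trans hb0 hx.1)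
      · intro x hx
        exact hderiv x (le_trans hb0 hx.1.le)
    have hφIci : IntegrableOn φ (Ici (t - 2)) := hφint.mono_set (Ici_subset_Ici.2 h02)
    have h3 : (∫ x in b..t, φ x) ≤ ∫ x in Ici (t - 2), φ x := by
      rw [intervalIntegral.integral_of_le hbt]
      apply setIntegral_mono_set hφIci
      · rw [EventuallyLE, ae_restrict_iff' measurableSet_Ici]
        filter_upwards with x hx
        exact hφpos x (le_trans h02 hx)
      · exact HasSubset.Subset.eventuallyLE (fun x hx => le_trans hbmem.1 hx.1.le)
    have hYIci : IntegrableOn Y (Ici (t - 2)) := hYint.mono_set (Ici_subset_Ici.2 h02)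
    have h4 : (∫ x in Icc (t - 2) (t - 1), Y x) ≤ ∫ x in Ici (t - 2), Y x := by
      apply setIntegral_mono_set hYIci
      · rw [EventuallyLE, ae_restrict_iff' measurableSet_Ici]
        filter_upwards with x hx
        exact hYpos x (le_trans h02 hx)
      · exact HasSubset.Subset.eventuallyLE (fun x hx => hx.1)
    have h5 : T (t - 2) = (∫ x in Ici (t - 2), Y x) + ∫ x in Ici (t - 2), φ x := by
      simp only [hT, hF]
      exact integral_add hYIci hφIci
    linarith
  -- conclude
  rw [Metric.tendsto_atTop]
  intro ε hε
  obtain ⟨N, hN⟩ := (Metric.tendsto_atTop.1 hTn) ε hε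
  refine ⟨max ((N:ℝ) + 2) 2, fun t ht => ?_⟩
  have h2t : (2:ℝ) ≤ t := le_trans (le_max_right _ _) ht
  have hNt : (N:ℝ) ≤ t - 2 := by
    have := le_trans (le_max_left _ _) ht
    linarith
  have hTN := hN N le_rfl
  rw [Real.dist_eq, sub_zero] at hTN
  have hle : T (t - 2) ≤ T N := hTanti N (t - 2) N.cast_nonneg hNt
  have hlt : T (t - 2) < ε := lt_of_le_of_lt hle (lt_of_le_of_lt (le_abs_self _) hTN)
  rw [Real.dist_eq, sub_zero, abs_of_nonneg (hYpos t (by linarith))]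
  exact lt_of_le_of_lt (key t h2t) hlt
end
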